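/- Let d ≥ 1 and let X be a nonempty compact metric space equipped with a continuous additive action of ℝ^d (written (v,T) ↦ v +ᵥ T) that is uniquely ergodic with invariant Borel probability measure μ. Let α : X × ℝ^d → ℝ^d be a continuous dynamical cocycle, and suppose there exist constants λ ≥ 1 and C ≥ 0 such that λ⁻¹‖v‖ − C ≤ ‖α(T,v)‖ ≤ λ‖v‖ + C for all T ∈ X and v ∈ ℝ^d. Then the map A : ℝ^d → ℝ^d defined by A(v) = ∫_X α(T,v) dμ(T) is a bijective ℝ-linear map. (This is the abstract content of the theorem that the Ruelle–Sullivan image C_μ[h] of a homeomorphism/orbit equivalence of uniquely ergodic tiling spaces is an invertible matrix.) -/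

import Mathlib

open MeasureTheory

/-- `Euc d` is `d`-dimensional Euclidean space. -/
abbrev Euc (d : ℕ) := EuclideanSpace ℝ (Fin d)

open Filter Function
open scoped Topology ENNReal

/-- If every translation preserves `ν` when its density w.r.t. `μ` is invariant... helper:
a measurable, a.e.-bounded, translation-invariant real function is a.e. constant,
by unique ergodicity. -/
lemma ae_eq_const_of_invariant {d : ℕ} {X : Type*} [MetricSpace X]
    [MeasurableSpace X] [BorelSpace X] [AddAction (Euc d) X] [ContinuousVAdd (Euc d) X]
    (μ : Measure X) [IsProbabilityMeasure μ]
    (hinv : ∀ v : Euc d, MeasurePreserving (fun T : X => v +ᵥ T) μ μ)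
    (huniq : ∀ ν : Measure X, IsProbabilityMeasure ν →
      (∀ v : Euc d, MeasurePreserving (fun T : X => v +ᵥ T) ν ν) → ν = μ)
    (φ : X → ℝ) (hφm : Measurable φ) (M : ℝ) (hb : ∀ᵐ T ∂μ, |φ T| ≤ M)
    (hinvφ : ∀ w : Euc d, (fun T => φ (w +ᵥ T)) =ᵐ[μ] φ) :
    φ =ᵐ[μ] fun _ => ∫ T, φ T ∂μ := by
  have hφi : Integrable φ μ := by
    refine (integrable_const M).mono' hφm.aestronglyMeasurable ?_
    simpa [Real.norm_eq_abs] using hb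
  set c : ℝ := ∫ T, φ T ∂μ with hc
  set M' : ℝ := M + |c| + 1 with hM'
  have hM'pos : 0 < M' := by
    have : 0 ≤ M := by
      rcases hb.exists with ⟨T, hT⟩
      exact (abs_nonneg _).trans hT
    positivity
  set r : X → ℝ := fun T => 1 + (φ T - c) / M' with hr
  have hrm : Measurable r := by fun_prop
  have hrb : ∀ᵐ T ∂μ, 0 ≤ r T ∧ r T ≤ 2 := by
    filter_upwards [hb] with T hT
    have h1 : |φ T - c| ≤ M + |c| := (abs_sub _ _).trans (by gcongr)
    have h2 : |(φ T - c) / M'| ≤ 1 := by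
      rw [abs_div, abs_of_pos hM'pos, div_le_one hM'pos]
      linarith
    rw [abs_le] at h2
    constructor
    · show (0:ℝ) ≤ 1 + (φ T - c) / M'
      linarith
    · show 1 + (φ T - c) / M' ≤ 2
      linarith
  have hrint : Integrable r μ := by
    refine (integrable_const 2).mono' hrm.aestronglyMeasurable ?_
    filter_upwards [hrb] with T hT
    rw [Real.norm_eq_abs, abs_le]; exact ⟨by linarith [hT.1], hT.2⟩
  have hsubint : Integrable (fun T => (φ T - c) / M') μ :=
    ((hφi.sub (integrable_const c)).div_const M')
  have hrI : ∫ T, r T ∂μ = 1 := by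
    have h1 : ∫ T, r T ∂μ = ∫ T, ((fun _ => (1:ℝ)) T + (fun T => (φ T - c) / M') T) ∂μ := rfl
    rw [h1, integral_add (integrable_const 1) hsubint]
    have h2 : ∫ T, (φ T - c) / M' ∂μ = (∫ T, (φ T - c) ∂μ) / M' := integral_div M' _
    rw [h2, integral_sub hφi (integrable_const c)]
    simp [hc]
  set ρ : X → ℝ≥0∞ := fun T => ENNReal.ofReal (r T) with hρ
  have hρm : Measurable ρ := hrm.ennreal_ofReal
  set ν : Measure X := μ.withDensity ρ with hν
  have hνuniv : ν Set.univ = 1 := by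
    rw [hν, withDensity_apply _ MeasurableSet.univ, setLIntegral_univ,
      ← ofReal_integral_eq_lintegral_ofReal hrint (hrb.mono fun T hT => hT.1), hrI]
    simp
  have hνprob : IsProbabilityMeasure ν := ⟨hνuniv⟩
  have hρinv : ∀ w : Euc d, (fun T => ρ (w +ᵥ T)) =ᵐ[μ] ρ := by
    intro w
    filter_upwards [hinvφ w] with T hT
    simp only [hρ, hr, hT]
  have hνinv : ∀ w : Euc d, MeasurePreserving (fun T : X => w +ᵥ T) ν ν := by
    intro w
    have hwm : Measurable fun T : X => w +ᵥ T := (continuous_const_vadd w).measurable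
    refine ⟨hwm, ?_⟩
    refine Measure.ext fun s hs => ?_
    rw [Measure.map_apply hwm hs, hν, withDensity_apply _ (hwm hs), withDensity_apply _ hs]
    calc ∫⁻ T in (fun T : X => w +ᵥ T) ⁻¹' s, ρ T ∂μ
        = ∫⁻ T in (fun T : X => w +ᵥ T) ⁻¹' s, ρ (w +ᵥ T) ∂μ :=
          lintegral_congr_ae (ae_restrict_of_ae ((hρinv w).symm))
      _ = ∫⁻ T, ((fun T : X => w +ᵥ T) ⁻¹' s).indicator (fun T => ρ (w +ᵥ T)) T ∂μ := by
          rw [lintegral_indicator (hwm hs)]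
      _ = ∫⁻ T, s.indicator ρ (w +ᵥ T) ∂μ :=
          lintegral_congr fun T => by
            by_cases h : w +ᵥ T ∈ s <;>
              simp [Set.indicator_apply, h, Set.mem_preimage]
      _ = ∫⁻ T, s.indicator ρ T ∂μ := (hinv w).lintegral_comp (hρm.indicator hs)
      _ = ∫⁻ T in s, ρ T ∂μ := lintegral_indicator hs ρ
  have hνμ : ν = μ := huniq ν hνprob hνinv
  have hρ1 : ρ =ᵐ[μ] fun _ => (1 : ℝ≥0∞) := by
    rw [← withDensity_eq_iff_of_sigmaFinite hρm.aemeasurable measurable_const.aemeasurable]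
    rw [← hν, hνμ, show (fun _ : X => (1:ℝ≥0∞)) = (1 : X → ℝ≥0∞) from rfl, withDensity_one]
  filter_upwards [hρ1, hrb] with T hT hTb
  have : r T = 1 := by
    rw [hρ] at hT
    simpa using (ENNReal.ofReal_eq_one).mp hT
  have := this
  rw [hr] at this
  have h0 : (φ T - c) / M' = 0 := by linarith
  have := (div_eq_zero_iff.mp h0).resolve_right (ne_of_gt hM'pos)
  simpa [hc] using by linarith


set_option maxHeartbeats 2000000 in
/-- The Ruelle–Sullivan image of a bi-Lipschitz-at-large-scale cocycle over a
uniquely ergodic `ℝ^d`-action is an invertible linear map. -/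
theorem ruelle_sullivan_invertible
    (d : ℕ) (hd : 1 ≤ d)
    (X : Type*) [MetricSpace X] [CompactSpace X] [Nonempty X]
    [MeasurableSpace X] [BorelSpace X]
    [AddAction (Euc d) X] [ContinuousVAdd (Euc d) X]
    (μ : Measure X) [IsProbabilityMeasure μ]
    (hinv : ∀ v : Euc d, MeasurePreserving (fun T : X => v +ᵥ T) μ μ)
    (huniq : ∀ ν : Measure X, IsProbabilityMeasure ν →
      (∀ v : Euc d, MeasurePreserving (fun T : X => v +ᵥ T) ν ν) → ν = μ)
    (α : X → Euc d → Euc d)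
    (hαcont : Continuous fun p : X × Euc d => α p.1 p.2)
    (hcoc : ∀ (T : X) (v w : Euc d), α T (v + w) = α T v + α (v +ᵥ T) w)
    (lam C : ℝ) (hlam : 1 ≤ lam) (hC : 0 ≤ C)
    (hlow : ∀ (T : X) (v : Euc d), lam⁻¹ * ‖v‖ - C ≤ ‖α T v‖)
    (hup : ∀ (T : X) (v : Euc d), ‖α T v‖ ≤ lam * ‖v‖ + C) :
    ∃ L : Euc d →ₗ[ℝ] Euc d,
      (∀ v : Euc d, L v = ∫ T, α T v ∂μ) ∧ Function.Bijective L := by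
  have hcont : ∀ v : Euc d, Continuous fun T : X => α T v := fun v =>
    hαcont.comp (continuous_id.prodMk continuous_const)
  have hIntC : ∀ f : X → Euc d, Continuous f → Integrable f μ := fun f hf =>
    hf.integrable_of_hasCompactSupport (HasCompactSupport.of_compactSpace f)
  have hemb : ∀ v : Euc d, MeasurableEmbedding (fun T : X => v +ᵥ T) := by
    intro v
    exact Homeomorph.measurableEmbedding
      { toFun := fun T : X => v +ᵥ T
        invFun := fun T : X => (-v) +ᵥ T
        left_inv := fun T => by simp [vadd_vadd]
        right_inv := fun T => by simp [vadd_vadd]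
        continuous_toFun := continuous_const_vadd v
        continuous_invFun := continuous_const_vadd (-v) }
  have hshift : ∀ (v : Euc d) (f : X → Euc d), ∫ T, f (v +ᵥ T) ∂μ = ∫ T, f T ∂μ := fun v f =>
    (hinv v).integral_comp (hemb v) f
  set A : Euc d → Euc d := fun v => ∫ T, α T v ∂μ with hA
  have hAadd : ∀ v w, A (v + w) = A v + A w := by
    intro v w
    have h2 : Integrable (fun T => α (v +ᵥ T) w) μ :=
      hIntC _ ((hcont w).comp (continuous_const_vadd v))
    calc A (v + w) = ∫ T, (α T v + α (v +ᵥ T) w) ∂μ :=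
          integral_congr_ae (Filter.Eventually.of_forall fun T => hcoc T v w)
      _ = (∫ T, α T v ∂μ) + ∫ T, α (v +ᵥ T) w ∂μ := integral_add (hIntC _ (hcont v)) h2
      _ = A v + A w := by rw [hshift v (fun T => α T w)]
  set A1 : Euc d →+ Euc d := AddMonoidHom.mk' A hAadd with hA1
  have hAub : ∀ v : Euc d, ‖A v‖ ≤ lam * ‖v‖ + C := by
    intro v
    refine (norm_integral_le_of_norm_le (integrable_const _)
      (Filter.Eventually.of_forall fun T => hup T v)).trans ?_
    simp [integral_const, measure_univ]
  have hAle : ∀ v : Euc d, ‖A v‖ ≤ lam * ‖v‖ := by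
    intro v
    have key : ∀ n : ℕ, 1 ≤ n → ‖A v‖ ≤ lam * ‖v‖ + C / n := by
      intro n hn
      have hN : (0:ℝ) < n := by exact_mod_cast hn
      have h1 : A (n • v) = n • A v := A1.map_nsmul n v
      have h2 : ‖(n • A v : Euc d)‖ = (n:ℝ) * ‖A v‖ := by
        rw [← Nat.cast_smul_eq_nsmul ℝ, norm_smul]; simp
      have h2' : ‖(n • v : Euc d)‖ = (n:ℝ) * ‖v‖ := by
        rw [← Nat.cast_smul_eq_nsmul ℝ, norm_smul]; simp
      have h3 := hAub (n • v)
      rw [h1, h2, h2'] at h3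
      have h4 : (n:ℝ) * ‖A v‖ ≤ (n:ℝ) * (lam * ‖v‖ + C / n) := by
        rw [mul_add, mul_div_cancel₀ _ hN.ne']
        nlinarith
      exact le_of_mul_le_mul_left h4 hN
    have h0 : Filter.Tendsto (fun n : ℕ => lam * ‖v‖ + C / n) Filter.atTop
        (nhds (lam * ‖v‖ + 0)) :=
      tendsto_const_nhds.add (tendsto_const_div_atTop_nhds_zero_nat C)
    rw [add_zero] at h0
    exact ge_of_tendsto h0 (Filter.eventually_atTop.2 ⟨1, fun n hn => key n hn⟩)
  have hAcont : Continuous A := by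
    have hlip : LipschitzWith (Real.toNNReal lam) A := by
      apply LipschitzWith.of_dist_le_mul
      intro x y
      have hsub : A x - A y = A (x - y) := (A1.map_sub x y).symm
      rw [dist_eq_norm, dist_eq_norm, hsub]
      calc ‖A (x - y)‖ ≤ lam * ‖x - y‖ := hAle _
        _ = (Real.toNNReal lam : ℝ) * ‖x - y‖ := by
            rw [Real.coe_toNNReal _ (by linarith)]
    exact hlip.continuous
  have hAlb : ∀ v : Euc d, lam⁻¹ * ‖v‖ ≤ ‖A v‖ := by
    intro v
    set S : X → X := fun T => v +ᵥ T with hS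
    set f : X → Euc d := fun T => α T v with hf
    have hfc : Continuous f := hcont v
    have hfm : MemLp f 2 μ :=
      hfc.memLp_of_hasCompactSupport (HasCompactSupport.of_compactSpace f)
    set F : Lp (Euc d) 2 μ := hfm.toLp f with hF
    obtain ⟨U, hUG, ψ, hψconv⟩ :
        ∃ U : Lp (Euc d) 2 μ →L[ℝ] Lp (Euc d) 2 μ,
          (∀ G : Lp (Euc d) 2 μ, U G = Lp.compMeasurePreserving S (hinv v) G) ∧
          ∃ ψ : Lp (Euc d) 2 μ,
            Filter.Tendsto (birkhoffAverage ℝ (⇑U) _root_.id · F) Filter.atTop (nhds ψ) := by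
      refine ⟨(Lp.compMeasurePreservingₗᵢ (E := Euc d) (p := 2) ℝ S
          (hinv v)).toContinuousLinearMap, fun G => rfl, ?_⟩
      exact ⟨_, ContinuousLinearMap.tendsto_birkhoffAverage_orthogonalProjection (𝕜 := ℝ) _
        ((Lp.compMeasurePreservingₗᵢ (E := Euc d) (p := 2) ℝ S
          (hinv v)).norm_toContinuousLinearMap_le) F⟩
    set g : X → Euc d := ⇑ψ with hgdef
    -- pointwise identification of the Birkhoff averages
    have hSiter : ∀ (n : ℕ) (T : X), S^[n] T = (n • v) +ᵥ T := by
      intro n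
      induction n with
      | zero => intro T; simp
      | succ n ih =>
        intro T
        rw [Function.iterate_succ_apply', ih]
        show v +ᵥ ((n • v) +ᵥ T) = ((n + 1) • v) +ᵥ T
        rw [vadd_vadd, succ_nsmul, add_comm]
    have hbs : ∀ (n : ℕ) (T : X), birkhoffSum S f n T = α T (n • v) := by
      intro n
      induction n with
      | zero =>
        intro T
        have h := hcoc T 0 0
        rw [zero_add, zero_vadd] at h
        have h0 : α T 0 = 0 := left_eq_add.mp h
        simp [birkhoffSum_zero, h0]
      | succ n ih =>
        intro T
        rw [birkhoffSum_succ, ih, hSiter n T]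
        show α T (n • v) + α ((n • v) +ᵥ T) v = α T ((n + 1) • v)
        rw [succ_nsmul, hcoc T (n • v) v]
    set gS : ℕ → X → Euc d := fun n T => (n : ℝ)⁻¹ • α T (n • v) with hgS
    have hgSmeas : ∀ n, AEStronglyMeasurable (gS n) μ := fun n =>
      ((hcont (n • v)).const_smul ((n : ℝ)⁻¹)).aestronglyMeasurable
    have hit : ∀ n : ℕ, ⇑((⇑U)^[n] F) =ᵐ[μ] fun T => f (S^[n] T) := by
      intro n
      induction n with
      | zero => simpa using hfm.coeFn_toLp
      | succ n ih =>
        have h1 : (⇑U)^[n + 1] F = U ((⇑U)^[n] F) := Function.iterate_succ_apply' (⇑U) n F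
        have h2 : ⇑(U ((⇑U)^[n] F)) =ᵐ[μ] ⇑((⇑U)^[n] F) ∘ S := by
          rw [hUG]
          exact Lp.coeFn_compMeasurePreserving _ (hinv v)
        have h3 : ⇑((⇑U)^[n] F) ∘ S =ᵐ[μ] (fun T => f (S^[n] T)) ∘ S :=
          (hinv v).quasiMeasurePreserving.ae_eq_comp ih
        rw [h1]
        refine h2.trans (h3.trans ?_)
        refine Filter.EventuallyEq.of_eq (funext fun T => ?_)
        simp [Function.comp, Function.iterate_succ_apply]
    have hsum : ∀ n : ℕ, ⇑(birkhoffSum (⇑U) _root_.id n F) =ᵐ[μ]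
        fun T => birkhoffSum S f n T := by
      intro n
      induction n with
      | zero =>
        rw [birkhoffSum_zero']
        refine (Lp.coeFn_zero (Euc d) 2 μ).trans ?_
        refine Filter.EventuallyEq.of_eq (funext fun T => ?_)
        simp [birkhoffSum_zero']
      | succ n ih =>
        have h1 : birkhoffSum (⇑U) _root_.id (n + 1) F
            = birkhoffSum (⇑U) _root_.id n F + (⇑U)^[n] F := birkhoffSum_succ _ _ _ _
        rw [h1]
        filter_upwards [Lp.coeFn_add (birkhoffSum (⇑U) _root_.id n F) ((⇑U)^[n] F),
          ih, hit n] with T h2 h3 h4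
        rw [h2]
        show ⇑(birkhoffSum (⇑U) _root_.id n F) T + ⇑((⇑U)^[n] F) T = birkhoffSum S f (n + 1) T
        rw [h3, h4, birkhoffSum_succ]
    have haeq : ∀ n : ℕ, ⇑(birkhoffAverage ℝ (⇑U) _root_.id n F) =ᵐ[μ] gS n := by
      intro n
      have h1 : birkhoffAverage ℝ (⇑U) _root_.id n F
          = (n : ℝ)⁻¹ • birkhoffSum (⇑U) _root_.id n F := rfl
      rw [h1]
      filter_upwards [Lp.coeFn_smul ((n : ℝ)⁻¹) (birkhoffSum (⇑U) _root_.id n F),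
        hsum n] with T h2 h3
      rw [h2]
      show (n : ℝ)⁻¹ • ⇑(birkhoffSum (⇑U) _root_.id n F) T = gS n T
      rw [h3, hbs n T]
    -- L² convergence of `gS` to `g`
    have hsn : Filter.Tendsto (fun n => eLpNorm (gS n - g) 2 μ) Filter.atTop (nhds 0) := by
      have h1 : ∀ n, eLpNorm (gS n - g) 2 μ
          = ENNReal.ofReal ‖birkhoffAverage ℝ (⇑U) _root_.id n F - ψ‖ := by
        intro n
        have e1 : gS n - g =ᵐ[μ] ⇑(birkhoffAverage ℝ (⇑U) _root_.id n F - ψ) := by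
          filter_upwards [haeq n,
            Lp.coeFn_sub (birkhoffAverage ℝ (⇑U) _root_.id n F) ψ] with T h2 h3
          rw [h3]
          show gS n T - g T = ⇑(birkhoffAverage ℝ (⇑U) _root_.id n F) T - ⇑ψ T
          rw [h2, hgdef]
        rw [eLpNorm_congr_ae e1, Lp.norm_def,
          ENNReal.ofReal_toReal (Lp.eLpNorm_ne_top _)]
      have h2 : Filter.Tendsto (fun n => ‖birkhoffAverage ℝ (⇑U) _root_.id n F - ψ‖)
          Filter.atTop (nhds 0) := by
        rw [← tendsto_iff_norm_sub_tendsto_zero]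
        exact hψconv
      have h3 := (ENNReal.continuous_ofReal.tendsto 0).comp h2
      rw [ENNReal.ofReal_zero] at h3
      exact h3.congr fun n => (h1 n).symm
    have hTIM : TendstoInMeasure μ gS Filter.atTop g :=
      tendstoInMeasure_of_tendsto_eLpNorm (by norm_num) hgSmeas
        (Lp.aestronglyMeasurable ψ) hsn
    obtain ⟨ns, hmono, haeTend⟩ := hTIM.exists_seq_tendsto_ae
    -- pointwise bounds for the averages
    have hnsmul : ∀ n : ℕ, ‖(n • v : Euc d)‖ = (n : ℝ) * ‖v‖ := by
      intro n
      rw [← Nat.cast_smul_eq_nsmul ℝ, norm_smul]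
      simp
    have hgSub : ∀ (n : ℕ) (T : X), ‖gS n T‖ ≤ lam * ‖v‖ + C := by
      intro n T
      rcases Nat.eq_zero_or_pos n with h0 | h1
      · subst h0
        show ‖((0 : ℕ) : ℝ)⁻¹ • α T ((0 : ℕ) • v)‖ ≤ lam * ‖v‖ + C
        simp only [Nat.cast_zero, inv_zero, zero_smul, norm_zero]
        nlinarith [norm_nonneg v]
      · have hN : (0 : ℝ) < n := by exact_mod_cast h1
        have h2 : ‖gS n T‖ = (n : ℝ)⁻¹ * ‖α T (n • v)‖ := by
          show ‖(n : ℝ)⁻¹ • α T (n • v)‖ = _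
          rw [norm_smul, Real.norm_eq_abs, abs_of_pos (inv_pos.2 hN)]
        have h3 : ‖α T (n • v)‖ ≤ lam * ((n : ℝ) * ‖v‖) + C := by
          have h := hup T (n • v)
          rwa [hnsmul n] at h
        rw [h2]
        have hn1 : (1 : ℝ) ≤ (n : ℝ) := by exact_mod_cast h1
        calc (n : ℝ)⁻¹ * ‖α T (n • v)‖
            ≤ (n : ℝ)⁻¹ * (lam * ((n : ℝ) * ‖v‖) + C) :=
              mul_le_mul_of_nonneg_left h3 (inv_pos.2 hN).le
          _ = lam * ‖v‖ + C / n := by field_simp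
          _ ≤ lam * ‖v‖ + C := by
              have : C / (n : ℝ) ≤ C := div_le_self hC hn1
              linarith
    have hgSlb : ∀ n : ℕ, 1 ≤ n → ∀ T : X,
        lam⁻¹ * ‖v‖ - C / n ≤ ‖gS n T‖ := by
      intro n hn T
      have hN : (0 : ℝ) < n := by exact_mod_cast hn
      have h3 := hlow T (n • v)
      rw [hnsmul n] at h3
      have h2 : ‖gS n T‖ = (n : ℝ)⁻¹ * ‖α T (n • v)‖ := by
        show ‖(n : ℝ)⁻¹ • α T (n • v)‖ = _
        rw [norm_smul, Real.norm_eq_abs, abs_of_pos (inv_pos.2 hN)]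
      rw [h2]
      have h4 : (n : ℝ)⁻¹ * (lam⁻¹ * ((n : ℝ) * ‖v‖) - C)
          ≤ (n : ℝ)⁻¹ * ‖α T (n • v)‖ :=
        mul_le_mul_of_nonneg_left h3 (inv_pos.2 hN).le
      calc lam⁻¹ * ‖v‖ - C / n
          = (n : ℝ)⁻¹ * (lam⁻¹ * ((n : ℝ) * ‖v‖) - C) := by field_simp
        _ ≤ (n : ℝ)⁻¹ * ‖α T (n • v)‖ := h4
    -- (1) lower bound on ‖g‖
    have hglow : ∀ᵐ T ∂μ, lam⁻¹ * ‖v‖ ≤ ‖g T‖ := by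
      filter_upwards [haeTend] with T hT
      have hnorm : Filter.Tendsto (fun i => ‖gS (ns i) T‖) Filter.atTop (nhds ‖g T‖) := hT.norm
      have hlb : Filter.Tendsto (fun i : ℕ => lam⁻¹ * ‖v‖ - C / (ns i)) Filter.atTop
          (nhds (lam⁻¹ * ‖v‖ - 0)) :=
        tendsto_const_nhds.sub ((tendsto_const_div_atTop_nhds_zero_nat C).comp
          hmono.tendsto_atTop)
      rw [sub_zero] at hlb
      refine le_of_tendsto_of_tendsto hlb hnorm ?_
      exact Filter.eventually_atTop.2
        ⟨1, fun i hi => hgSlb (ns i) (le_trans hi hmono.le_apply) T⟩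
    -- (2) upper bound on ‖g‖
    have hgub : ∀ᵐ T ∂μ, ‖g T‖ ≤ lam * ‖v‖ + C := by
      filter_upwards [haeTend] with T hT
      exact le_of_tendsto hT.norm (Filter.Eventually.of_forall fun i => hgSub (ns i) T)
    -- (3) invariance of g
    have hkey : ∀ (w : Euc d) (n : ℕ) (T : X),
        α (w +ᵥ T) (n • v) - α T (n • v) = α ((n • v) +ᵥ T) w - α T w := by
      intro w n T
      have h1 : α T w + α (w +ᵥ T) (n • v) = α T (n • v) + α ((n • v) +ᵥ T) w := by
        rw [← hcoc T w (n • v), ← hcoc T (n • v) w, add_comm w (n • v)]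
      rw [sub_eq_sub_iff_add_eq_add, add_comm (α (w +ᵥ T) (n • v)) (α T w), h1]
      exact add_comm _ _
    have hdiff : ∀ (w : Euc d) (n : ℕ), 1 ≤ n → ∀ T : X,
        ‖gS n (w +ᵥ T) - gS n T‖ ≤ 2 * (lam * ‖w‖ + C) / n := by
      intro w n hn T
      have hN : (0 : ℝ) < n := by exact_mod_cast hn
      have h1 : gS n (w +ᵥ T) - gS n T = (n : ℝ)⁻¹ • (α ((n • v) +ᵥ T) w - α T w) := by
        show (n : ℝ)⁻¹ • α (w +ᵥ T) (n • v) - (n : ℝ)⁻¹ • α T (n • v) = _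
        rw [← smul_sub, hkey w n T]
      rw [h1, norm_smul, Real.norm_eq_abs, abs_of_pos (inv_pos.2 hN)]
      have h2 : ‖α ((n • v) +ᵥ T) w - α T w‖ ≤ 2 * (lam * ‖w‖ + C) := by
        refine (norm_sub_le _ _).trans ?_
        have ha := hup ((n • v) +ᵥ T) w
        have hb := hup T w
        linarith
      calc (n : ℝ)⁻¹ * ‖α ((n • v) +ᵥ T) w - α T w‖
          ≤ (n : ℝ)⁻¹ * (2 * (lam * ‖w‖ + C)) :=
            mul_le_mul_of_nonneg_left h2 (inv_pos.2 hN).le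
        _ = 2 * (lam * ‖w‖ + C) / n := by rw [inv_mul_eq_div]
    have hginvg : ∀ w : Euc d, (fun T => g (w +ᵥ T)) =ᵐ[μ] g := by
      intro w
      have hWae : ∀ᵐ T ∂μ, Filter.Tendsto (fun i => gS (ns i) (w +ᵥ T)) Filter.atTop
          (nhds (g (w +ᵥ T))) :=
        (hinv w).quasiMeasurePreserving.tendsto_ae.eventually haeTend
      filter_upwards [haeTend, hWae] with T h1 h2
      have hz : Filter.Tendsto (fun i => gS (ns i) (w +ᵥ T) - gS (ns i) T)
          Filter.atTop (nhds 0) := by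
        have hb : Filter.Tendsto (fun i : ℕ => 2 * (lam * ‖w‖ + C) / (ns i)) Filter.atTop
            (nhds 0) :=
          (tendsto_const_div_atTop_nhds_zero_nat _).comp hmono.tendsto_atTop
        refine squeeze_zero_norm' ?_ hb
        exact Filter.eventually_atTop.2
          ⟨1, fun i hi => hdiff w (ns i) (le_trans hi hmono.le_apply) T⟩
      have h4 := hz.add h1
      rw [zero_add] at h4
      simp only [sub_add_cancel] at h4
      exact tendsto_nhds_unique h2 h4
    -- (4) the integral of g is A v
    have hgSint : ∀ n : ℕ, 1 ≤ n → ∫ T, gS n T ∂μ = A v := by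
      intro n hn
      have hN : ((n : ℝ)) ≠ 0 := by
        have : (0 : ℝ) < n := by exact_mod_cast hn
        exact this.ne'
      calc ∫ T, gS n T ∂μ = (n : ℝ)⁻¹ • ∫ T, α T (n • v) ∂μ := by
            show ∫ T, (n : ℝ)⁻¹ • α T (n • v) ∂μ = _
            rw [integral_smul]
        _ = (n : ℝ)⁻¹ • A (n • v) := rfl
        _ = (n : ℝ)⁻¹ • ((n : ℕ) • A v) := by
            rw [show A (n • v) = (n : ℕ) • A v from A1.map_nsmul n v]
        _ = A v := by
            rw [← Nat.cast_smul_eq_nsmul ℝ, smul_smul, inv_mul_cancel₀ hN, one_smul]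
    have hdc : Filter.Tendsto (fun i => ∫ T, gS (ns i) T ∂μ) Filter.atTop
        (nhds (∫ T, g T ∂μ)) := by
      refine tendsto_integral_of_dominated_convergence (fun _ => lam * ‖v‖ + C)
        (fun i => hgSmeas (ns i)) (integrable_const _)
        (fun i => Filter.Eventually.of_forall fun T => hgSub (ns i) T) haeTend
    have hconst : Filter.Tendsto (fun i => ∫ T, gS (ns i) T ∂μ) Filter.atTop (nhds (A v)) := by
      refine Filter.Tendsto.congr' ?_ tendsto_const_nhds
      filter_upwards [Filter.eventually_atTop.2 ⟨1, fun (i : ℕ) hi => hi⟩] with i hi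
      exact (hgSint (ns i) (le_trans hi hmono.le_apply)).symm
    have hgint : ∫ T, g T ∂μ = A v := tendsto_nhds_unique hdc hconst
    -- (5) g is a.e. constant
    have hgmeas : Measurable g := (Lp.stronglyMeasurable ψ).measurable
    have hgintb : Integrable g μ := by
      refine (integrable_const (lam * ‖v‖ + C)).mono' (Lp.aestronglyMeasurable ψ) ?_
      filter_upwards [hgub] with T hT
      simpa using hT
    have hcoord : ∀ i : Fin d,
        (fun T => (inner ℝ (EuclideanSpace.single i (1 : ℝ)) (g T) : ℝ)) =ᵐ[μ]
          fun _ => (inner ℝ (EuclideanSpace.single i (1 : ℝ)) (A v) : ℝ) := by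
      intro i
      set u : Euc d := EuclideanSpace.single i (1 : ℝ) with hu
      have hknorm : ‖u‖ = 1 := by simp [hu, EuclideanSpace.norm_single]
      have hkc : Continuous fun x : Euc d => (inner ℝ u x : ℝ) :=
        continuous_const.inner continuous_id
      have hφm : Measurable fun T => (inner ℝ u (g T) : ℝ) := hkc.measurable.comp hgmeas
      have hb : ∀ᵐ T ∂μ, |(inner ℝ u (g T) : ℝ)| ≤ lam * ‖v‖ + C := by
        filter_upwards [hgub] with T hT
        calc |(inner ℝ u (g T) : ℝ)| ≤ ‖u‖ * ‖g T‖ := abs_real_inner_le_norm u (g T)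
          _ = ‖g T‖ := by rw [hknorm, one_mul]
          _ ≤ lam * ‖v‖ + C := hT
      have hinvφ : ∀ w : Euc d,
          (fun T => (inner ℝ u (g (w +ᵥ T)) : ℝ)) =ᵐ[μ] fun T => (inner ℝ u (g T) : ℝ) := by
        intro w
        filter_upwards [hginvg w] with T hT
        rw [hT]
      have hres := ae_eq_const_of_invariant μ hinv huniq
        (fun T => (inner ℝ u (g T) : ℝ)) hφm (lam * ‖v‖ + C) hb hinvφ
      have hφint : ∫ T, (inner ℝ u (g T) : ℝ) ∂μ = (inner ℝ u (A v) : ℝ) := by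
        rw [integral_inner hgintb u, hgint]
      refine hres.trans (Filter.EventuallyEq.of_eq ?_)
      funext T
      rw [hφint]
    have hgconst : ∀ᵐ T ∂μ, g T = A v := by
      have hall := (MeasureTheory.ae_all_iff).mpr hcoord
      filter_upwards [hall] with T hT
      ext i
      have h := hT i
      simpa [EuclideanSpace.inner_single_left] using h
    -- (6) conclude
    have hfinal : ∀ᵐ T ∂μ, lam⁻¹ * ‖v‖ ≤ ‖A v‖ := by
      filter_upwards [hglow, hgconst] with T h1 h2
      rwa [h2] at h1
    haveI : (MeasureTheory.ae μ).NeBot := ae_neBot.mpr (IsProbabilityMeasure.ne_zero μ)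
    obtain ⟨T, hT⟩ := hfinal.exists
    exact hT
  set L : Euc d →ₗ[ℝ] Euc d := (A1.toRealLinearMap hAcont).toLinearMap with hL
  have hLA : ∀ v, L v = A v := fun v => rfl
  have hinj : Function.Injective L := by
    refine (injective_iff_map_eq_zero L).2 fun v hv => ?_
    have hle : lam⁻¹ * ‖v‖ ≤ 0 := by
      have := hAlb v
      rw [← hLA v, hv] at this
      simpa using this
    have hlam0 : (0:ℝ) < lam⁻¹ := inv_pos.2 (by linarith)
    have : ‖v‖ = 0 := le_antisymm (by nlinarith) (norm_nonneg v)
    exact norm_eq_zero.mp this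
  exact ⟨L, hLA, hinj, LinearMap.injective_iff_surjective.1 hinj⟩
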